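/- Let G be a finite connected simple graph of order n ≥ 2 and size m. Then the edge-covering number of the subdivision graph S(G) satisfies ρ(S(G)) = max{n, m}. -/

import Mathlib

/-- The subdivision graph `S(G)`: vertices are `V(G) ⊕ E(G)`, with `v ∈ V(G)` adjacent to
`e ∈ E(G)` iff `v` is an endpoint of `e`. -/
def subdivision {V : Type*} (G : SimpleGraph V) : SimpleGraph (V ⊕ G.edgeSet) where
  Adj a b :=
    match a, b with
    | Sum.inl v, Sum.inr e => v ∈ (e : Sym2 V)
    | Sum.inr e, Sum.inl v => v ∈ (e : Sym2 V)
    | _, _ => False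
  symm := ⟨by rintro (v | e) (w | f) h <;> simp_all⟩
  loopless := ⟨by rintro (v | e) h <;> simp_all⟩

/-- Every edge of the subdivision graph has the form `s(inl v, inr e)` with `v ∈ e`. -/
lemma subdivision_edge_form {V : Type*} (G : SimpleGraph V) {a : Sym2 (V ⊕ G.edgeSet)}
    (h : a ∈ (subdivision G).edgeSet) :
    ∃ (v : V) (e : G.edgeSet), v ∈ (e : Sym2 V) ∧ a = s(Sum.inl v, Sum.inr e) := by
  induction a using Sym2.ind with
  | _ x y =>
    rw [SimpleGraph.mem_edgeSet] at h
    rcases x with v | e <;> rcases y with w | f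
    · exact absurd h (by simp [subdivision])
    · exact ⟨v, f, h, rfl⟩
    · exact ⟨w, e, h, Sym2.eq_swap⟩
    · exact absurd h (by simp [subdivision])

/-- Auxiliary: give a choice `Q v` of an edge through each vertex `v`, there is an edge
cover of the subdivision graph of cardinality `card V + |(range Q)ᶜ|`. -/
lemma cover_card {V : Type*} [Fintype V] (G : SimpleGraph V) (Q : V → G.edgeSet)
    (hQ : ∀ v, v ∈ (Q v : Sym2 V)) :
    ∃ A : Set (Sym2 (V ⊕ G.edgeSet)), A ⊆ (subdivision G).edgeSet ∧
      (∀ x : V ⊕ G.edgeSet, ∃ e ∈ A, x ∈ e) ∧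
      A.ncard = Fintype.card V + (Set.range Q)ᶜ.ncard := by
  classical
  set pt : G.edgeSet → V := fun e => (e : Sym2 V).out.1 with hpt
  have hptmem : ∀ e : G.edgeSet, pt e ∈ (e : Sym2 V) := fun e => Sym2.out_fst_mem _
  set F1 : V → Sym2 (V ⊕ G.edgeSet) := fun v => s(Sum.inl v, Sum.inr (Q v)) with hF1
  set F2 : G.edgeSet → Sym2 (V ⊕ G.edgeSet) := fun e => s(Sum.inl (pt e), Sum.inr e) with hF2
  refine ⟨F1 '' Set.univ ∪ F2 '' (Set.range Q)ᶜ, ?_, ?_, ?_⟩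
  · rintro a (⟨v, -, rfl⟩ | ⟨e, -, rfl⟩)
    · exact hQ v
    · exact hptmem e
  · rintro (v | e)
    · exact ⟨F1 v, Or.inl ⟨v, Set.mem_univ v, rfl⟩, by simp [hF1]⟩
    · by_cases he : e ∈ Set.range Q
      · obtain ⟨v, rfl⟩ := he
        exact ⟨F1 v, Or.inl ⟨v, Set.mem_univ v, rfl⟩, by simp [hF1]⟩
      · exact ⟨F2 e, Or.inr ⟨e, he, rfl⟩, by simp [hF2]⟩
  · have hinj1 : Function.Injective F1 := by
      intro v w h
      simp only [hF1, Sym2.eq_iff] at h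
      rcases h with ⟨h1, -⟩ | ⟨h1, -⟩
      · exact Sum.inl.inj h1
      · exact absurd h1 (by simp)
    have hinj2 : Set.InjOn F2 (Set.range Q)ᶜ := by
      intro e _ f _ h
      simp only [hF2, Sym2.eq_iff] at h
      rcases h with ⟨-, h2⟩ | ⟨h1, -⟩
      · exact Sum.inr.inj h2
      · exact absurd h1 (by simp)
    have hdisj : Disjoint (F1 '' Set.univ) (F2 '' (Set.range Q)ᶜ) := by
      rw [Set.disjoint_left]
      rintro a ⟨v, -, rfl⟩ ⟨e, he, heq⟩
      simp only [hF1, hF2, Sym2.eq_iff] at heq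
      rcases heq with ⟨-, h2⟩ | ⟨h1, -⟩
      · exact he ⟨v, (Sum.inr.inj h2).symm⟩
      · exact absurd h1 (by simp)
    rw [Set.ncard_union_eq hdisj (Set.toFinite _) (Set.toFinite _),
      Set.ncard_image_of_injective _ hinj1, Set.ncard_image_of_injOn hinj2,
      Set.ncard_univ, Nat.card_eq_fintype_card]

/-- Existence of a parent vertex (a neighbour strictly closer to the root). -/
lemma exists_parent {V : Type*} {G : SimpleGraph V} (hconn : G.Connected) (r v : V)
    (hv : v ≠ r) : ∃ w, G.Adj v w ∧ G.dist r w + 1 = G.dist r v := by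
  obtain ⟨p, hp⟩ := hconn.exists_walk_length_eq_dist v r
  cases p with
  | nil => exact absurd rfl hv
  | @cons _ w _ h q =>
    refine ⟨w, h, ?_⟩
    have h1 : G.dist r w ≤ q.length := by
      rw [SimpleGraph.dist_comm]; exact SimpleGraph.dist_le q
    have h2 : G.dist r v ≤ G.dist r w + 1 := by
      calc G.dist r v ≤ G.dist r w + G.dist w v := hconn.dist_triangle
        _ ≤ G.dist r w + 1 := by
            have : G.dist w v = 1 := SimpleGraph.dist_eq_one_iff_adj.mpr h.symm
            omega
    simp only [SimpleGraph.Walk.length_cons] at hp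
    rw [SimpleGraph.dist_comm (u := v) (v := r)] at hp
    omega

/-- For a finite connected simple graph `G` of order `n ≥ 2` and size `m`,
`ρ(S(G)) = max {n, m}`, i.e. `max {n, m}` is the least cardinality of an edge cover
(a set of edges covering every vertex) of `S(G)`. -/
theorem edgeCoverNum_subdivision {V : Type*} [Fintype V] (G : SimpleGraph V)
    (hconn : G.Connected) (hn : 2 ≤ Fintype.card V) :
    IsLeast {k : ℕ | ∃ A : Set (Sym2 (V ⊕ G.edgeSet)),
        A ⊆ (subdivision G).edgeSet ∧
        (∀ x : V ⊕ G.edgeSet, ∃ e ∈ A, x ∈ e) ∧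
        A.ncard = k}
      (max (Fintype.card V) G.edgeSet.ncard) := by
  classical
  set n := Fintype.card V with hn'
  set m := G.edgeSet.ncard with hm'
  obtain ⟨r⟩ : Nonempty V := Fintype.card_pos_iff.mp (by omega)
  constructor
  · -- membership : there is a cover of size `max n m`
    -- parent map
    set W : V → V := fun v => if h : v = r then r else (exists_parent hconn r v h).choose
      with hWdef
    have hW1 : ∀ v, v ≠ r → G.Adj v (W v) := by
      intro v h
      simp only [hWdef, dif_neg h]
      exact (exists_parent hconn r v h).choose_spec.1
    have hW2 : ∀ v, v ≠ r → G.dist r (W v) + 1 = G.dist r v := by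
      intro v h
      simp only [hWdef, dif_neg h]
      exact (exists_parent hconn r v h).choose_spec.2
    have hdist0 : ∀ v : V, G.dist r v = 0 ↔ v = r := by
      intro v; rw [hconn.dist_eq_zero_iff]; exact eq_comm
    set pe : V → Sym2 V := fun v => s(v, W v) with hpe
    have hpemem : ∀ v, v ≠ r → pe v ∈ G.edgeSet := fun v h => hW1 v h
    have hpeinj : Set.InjOn pe {v | v ≠ r} := by
      intro v1 hv1 v2 hv2 h
      simp only [hpe, Sym2.eq_iff] at h
      rcases h with ⟨h1, -⟩ | ⟨h1, h2⟩
      · exact h1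
      · exfalso
        have e1 := hW2 v1 hv1
        have e2 := hW2 v2 hv2
        rw [← h1] at e2
        rw [h2] at e1
        omega
    set R : Set (Sym2 V) := pe '' {v | v ≠ r} with hR
    have hRsub : R ⊆ G.edgeSet := by
      rintro e ⟨v, hv, rfl⟩; exact hpemem v hv
    have hcomplr : ({v | v ≠ r} : Set V).ncard = n - 1 := by
      have h1 : ({v | v ≠ r} : Set V) = ({r} : Set V)ᶜ := by
        ext v; simp
      have h2 := Set.ncard_add_ncard_compl ({r} : Set V)
      rw [Set.ncard_singleton, Nat.card_eq_fintype_card] at h2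
      rw [h1]
      omega
    have hRcard : R.ncard = n - 1 := by
      rw [hR, Set.ncard_image_of_injOn hpeinj, hcomplr]
    by_cases hRE : G.edgeSet ⊆ R
    · -- `G` is a tree ; `m = n - 1`
      have hREq : R = G.edgeSet := Set.Subset.antisymm hRsub hRE
      have hmn : m = n - 1 := by rw [hm', ← hREq, hRcard]
      -- find a neighbour of `r`
      obtain ⟨b, hbr⟩ : ∃ b : V, b ≠ r := by
        by_contra hcon
        push_neg at hcon
        have : Fintype.card V ≤ 1 := Fintype.card_le_one_iff.mpr fun a b => by
          rw [hcon a, hcon b]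
        omega
      obtain ⟨c, hc⟩ : ∃ c, G.Adj r c := by
        obtain ⟨p, -⟩ := hconn.exists_walk_length_eq_dist r b
        cases p with
        | nil => exact absurd rfl hbr.symm
        | @cons _ w _ h q => exact ⟨w, h⟩
      set q0 : V → Sym2 V := fun v => if v = r then s(r, c) else pe v with hq0
      have hq0mem : ∀ v, q0 v ∈ G.edgeSet := by
        intro v
        by_cases h : v = r
        · simp only [hq0, if_pos h]; exact hc
        · simp only [hq0, if_neg h]; exact hpemem v h
      set Q : V → G.edgeSet := fun v => ⟨q0 v, hq0mem v⟩ with hQ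
      have hQself : ∀ v, v ∈ (Q v : Sym2 V) := by
        intro v
        by_cases h : v = r
        · simp [hQ, hq0, if_pos h, h]
        · simp [hQ, hq0, if_neg h, hpe]
      obtain ⟨A, h1, h2, h3⟩ := cover_card G Q hQself
      refine ⟨A, h1, h2, ?_⟩
      have hcompl : (Set.range Q)ᶜ = (∅ : Set G.edgeSet) := by
        ext e
        simp only [Set.mem_compl_iff, Set.mem_range, Set.mem_empty_iff_false, iff_false,
          not_not]
        obtain ⟨v, hv, hveq⟩ : (e : Sym2 V) ∈ R := hRE e.2
        refine ⟨v, ?_⟩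
        apply Subtype.ext
        simp only [hQ, hq0, if_neg hv]
        exact hveq
      rw [h3, hcompl, Set.ncard_empty]
      have : max n m = n := Nat.max_eq_left (by omega)
      omega
    · -- `G` has an edge outside of the BFS tree; `m ≥ n`
      obtain ⟨f, hf1, hf2⟩ := Set.not_subset.mp hRE
      revert hf1 hf2
      induction f using Sym2.ind with
      | _ x y =>
      intro hf1 hf2
      have hxy : G.Adj x y := hf1
      have hWadj : ∀ v, G.Adj r v → W v = r := by
        intro v hv
        have hvr : v ≠ r := hv.ne'
        have h1 : G.dist r v = 1 := SimpleGraph.dist_eq_one_iff_adj.mpr hv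
        have h2 := hW2 v hvr
        rw [h1] at h2
        exact (hdist0 _).mp (by omega)
      have hxr : x ≠ r := by
        rintro rfl
        refine hf2 ⟨y, hxy.ne', ?_⟩
        simp only [hpe, hWadj y hxy]
        exact Sym2.eq_swap
      have hyr : y ≠ r := by
        rintro rfl
        refine hf2 ⟨x, hxy.ne, ?_⟩
        simp only [hpe, hWadj x hxy.symm]
      set d := G.dist r x with hd
      have hd1 : 1 ≤ d := hconn.pos_dist_of_ne (Ne.symm hxr)
      have hchain : ∀ k, k ≤ d → G.dist r (W^[k] x) = d - k := by
        intro k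
        induction k with
        | zero => intro _; simp [hd.symm]
        | succ k ih =>
          intro hk
          have h1 : G.dist r (W^[k] x) = d - k := ih (by omega)
          have hne : W^[k] x ≠ r := by
            intro h
            rw [h] at h1
            rw [(hdist0 r).mpr rfl] at h1  -- wrong direction; fix below
            omega
          rw [Function.iterate_succ_apply']
          have h2 := hW2 _ hne
          omega
      have hchain_r : W^[d] x = r := by
        have := hchain d le_rfl
        simp only [Nat.sub_self] at this
        exact (hdist0 _).mp this
      have hchain_ne : ∀ k, k < d → W^[k] x ≠ r := by
        intro k hk h
        have h1 := hchain k (le_of_lt hk)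
        rw [h] at h1
        have h2 : G.dist r r = 0 := (hdist0 r).mpr rfl
        omega
      have hchain_inj : ∀ k l, k ≤ d → l ≤ d → W^[k] x = W^[l] x → k = l := by
        intro k l hk hl h
        have h1 := hchain k hk
        have h2 := hchain l hl
        rw [h] at h1
        omega
      set q : V → Sym2 V := fun v =>
        if h : ∃ k, k ≤ d ∧ W^[k] x = v then
          (if Nat.find h = 0 then s(x, y) else pe (W^[Nat.find h - 1] x))
        else pe v with hq
      have hqchain : ∀ k, k ≤ d →
          q (W^[k] x) = if k = 0 then s(x, y) else pe (W^[k - 1] x) := by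
        intro k hk
        have hex : ∃ k', k' ≤ d ∧ W^[k'] x = W^[k] x := ⟨k, hk, rfl⟩
        have hfind : Nat.find hex = k :=
          hchain_inj _ _ (Nat.find_spec hex).1 hk (Nat.find_spec hex).2
        simp only [hq]
        rw [dif_pos hex, hfind]
      have hqnot : ∀ v, (¬∃ k, k ≤ d ∧ W^[k] x = v) → q v = pe v := by
        intro v h
        simp only [hq]
        rw [dif_neg h]
      have hnotchain_ne : ∀ v, (¬∃ k, k ≤ d ∧ W^[k] x = v) → v ≠ r := by
        intro v h hvr
        exact h ⟨d, le_rfl, by rw [hchain_r, hvr]⟩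
      have hqmem : ∀ v, q v ∈ G.edgeSet := by
        intro v
        by_cases h : ∃ k, k ≤ d ∧ W^[k] x = v
        · obtain ⟨k, hk, rfl⟩ := h
          rw [hqchain k hk]
          split_ifs with h0
          · exact hf1
          · exact hpemem _ (hchain_ne (k - 1) (by omega))
        · rw [hqnot v h]
          exact hpemem v (hnotchain_ne v h)
      have hqself : ∀ v, v ∈ q v := by
        intro v
        by_cases h : ∃ k, k ≤ d ∧ W^[k] x = v
        · obtain ⟨k, hk, rfl⟩ := h
          rw [hqchain k hk]
          split_ifs with h0
          · subst h0; simp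
          · have hstep : W^[k] x = W (W^[k - 1] x) := by
              conv_lhs => rw [show k = (k - 1) + 1 by omega]
              rw [Function.iterate_succ_apply']
            rw [hstep]
            simp [hpe]
        · rw [hqnot v h]
          simp [hpe]
      set Q : V → G.edgeSet := fun v => ⟨q v, hqmem v⟩ with hQ
      have hQself : ∀ v, v ∈ (Q v : Sym2 V) := hqself
      have hQinj : Function.Injective Q := by
        intro v1 v2 hh
        have h' : q v1 = q v2 := congrArg Subtype.val hh
        by_cases h1 : ∃ k, k ≤ d ∧ W^[k] x = v1 <;>
          by_cases h2 : ∃ k, k ≤ d ∧ W^[k] x = v2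
        · obtain ⟨k, hk, rfl⟩ := h1
          obtain ⟨l, hl, rfl⟩ := h2
          rw [hqchain k hk, hqchain l hl] at h'
          split_ifs at h' with e1 e2 e2
          · rw [e1, e2]
          · exact absurd ⟨W^[l - 1] x, hchain_ne (l - 1) (by omega), h'.symm⟩ hf2
          · exact absurd ⟨W^[k - 1] x, hchain_ne (k - 1) (by omega), h'⟩ hf2
          · have heq : W^[k - 1] x = W^[l - 1] x :=
              hpeinj (hchain_ne (k - 1) (by omega)) (hchain_ne (l - 1) (by omega)) h'
            have : k - 1 = l - 1 := hchain_inj _ _ (by omega) (by omega) heq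
            have : k = l := by omega
            rw [this]
        · obtain ⟨k, hk, rfl⟩ := h1
          rw [hqchain k hk, hqnot v2 h2] at h'
          split_ifs at h' with e1
          · exact absurd ⟨v2, hnotchain_ne v2 h2, h'.symm⟩ hf2
          · have heq : W^[k - 1] x = v2 :=
              hpeinj (hchain_ne (k - 1) (by omega)) (hnotchain_ne v2 h2) h'
            exact absurd ⟨k - 1, by omega, heq⟩ h2
        · obtain ⟨l, hl, rfl⟩ := h2
          rw [hqchain l hl, hqnot v1 h1] at h'
          split_ifs at h' with e1
          · exact absurd ⟨v1, hnotchain_ne v1 h1, h'⟩ hf2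
          · have heq : W^[l - 1] x = v1 :=
              hpeinj (hchain_ne (l - 1) (by omega)) (hnotchain_ne v1 h1) h'.symm
            exact absurd ⟨l - 1, by omega, heq⟩ h1
        · rw [hqnot v1 h1, hqnot v2 h2] at h'
          exact hpeinj (hnotchain_ne v1 h1) (hnotchain_ne v2 h2) h'
      obtain ⟨A, hA1, hA2, hA3⟩ := cover_card G Q hQself
      refine ⟨A, hA1, hA2, ?_⟩
      have hcard : (Set.range Q).ncard + (Set.range Q)ᶜ.ncard = m := by
        rw [Set.ncard_add_ncard_compl, Nat.card_coe_set_eq]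
      have hrange : (Set.range Q).ncard = n := by
        rw [← Set.image_univ, Set.ncard_image_of_injective _ hQinj, Set.ncard_univ,
          Nat.card_eq_fintype_card]
      rw [hA3]
      have hnm : n ≤ m := by omega
      rw [Nat.max_eq_right hnm]
      omega
  · -- lower bound
    rintro k ⟨A, hsub, hcov, rfl⟩
    have hAfin : A.Finite := Set.toFinite A
    -- n ≤ |A|
    have hlow1 : Fintype.card V ≤ A.ncard := by
      have : ∀ v : V, ∃ e ∈ A, (Sum.inl v : V ⊕ G.edgeSet) ∈ e := fun v => hcov (Sum.inl v)
      choose F hF1 hF2 using this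
      have hFi : Set.InjOn F Set.univ := by
        intro v1 _ v2 _ h
        obtain ⟨u, e, -, hform⟩ := subdivision_edge_form G (hsub (hF1 v1))
        have m1 := hF2 v1
        have m2 := hF2 v2
        rw [h] at m1 hform
        rw [hform] at m1 m2
        simp only [Sym2.mem_iff] at m1 m2
        rcases m1 with m1 | m1 <;> rcases m2 with m2 | m2
        · exact Sum.inl.inj (m1.trans m2.symm)
        · exact absurd m2 (by simp)
        · exact absurd m1 (by simp)
        · exact absurd m1 (by simp)
      calc Fintype.card V = (Set.univ : Set V).ncard := by
            rw [Set.ncard_univ, Nat.card_eq_fintype_card]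
        _ ≤ A.ncard := Set.ncard_le_ncard_of_injOn F (fun v _ => hF1 v) hFi hAfin
    -- m ≤ |A|
    have hlow2 : G.edgeSet.ncard ≤ A.ncard := by
      have : ∀ e : G.edgeSet, ∃ a ∈ A, (Sum.inr e : V ⊕ G.edgeSet) ∈ a := fun e =>
        hcov (Sum.inr e)
      choose F hF1 hF2 using this
      have hFi : Set.InjOn F Set.univ := by
        intro e1 _ e2 _ h
        obtain ⟨u, e, -, hform⟩ := subdivision_edge_form G (hsub (hF1 e1))
        have m1 := hF2 e1
        have m2 := hF2 e2
        rw [h] at m1 hform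
        rw [hform] at m1 m2
        simp only [Sym2.mem_iff] at m1 m2
        rcases m1 with m1 | m1 <;> rcases m2 with m2 | m2
        · exact absurd m1 (by simp)
        · exact absurd m1 (by simp)
        · exact absurd m2 (by simp)
        · exact Sum.inr.inj (m1.trans m2.symm)
      calc G.edgeSet.ncard = (Set.univ : Set G.edgeSet).ncard := by
            rw [Set.ncard_univ, Nat.card_coe_set_eq]
        _ ≤ A.ncard := Set.ncard_le_ncard_of_injOn F (fun e _ => hF1 e) hFi hAfin
    exact max_le hlow1 hlow2
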